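/- arXiv:2307.04049 — 3 statements merged into one kernel-verified Lean document; each statement's English description precedes it below -/
import Mathlib

section
/- Odd-Even Transposition Sort sorts any array of n elements in at most n rounds: if in odd rounds every pair of entries at positions (2i+1, 2i+2) is swapped when out of order, and in even rounds every pair at positions (2i, 2i+1) is swapped when out of order, alternating for n total rounds, the resulting array is sorted in nondecreasing order. -/
variable {α : Type*} [LinearOrder α] {n : ℕ}

/-- One half-round of Odd-Even Transposition Sort with offset `r`: every adjacent pair
`(i, i+1)` with `i % 2 = r % 2` is compare-exchanged (replaced by `(min, max)`)
simultaneously. -/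
def oetsRound (r : ℕ) (a : Fin n → α) : Fin n → α := fun i =>
  if (i : ℕ) % 2 = r % 2 then
    if h : (i : ℕ) + 1 < n then min (a i) (a ⟨(i : ℕ) + 1, h⟩) else a i
  else
    if h : 0 < (i : ℕ) then
      max (a ⟨(i : ℕ) - 1, lt_of_le_of_lt (Nat.sub_le _ _) i.isLt⟩) (a i)
    else a i

/-- The OETS trajectory: round `t+1` is odd (pairs starting at odd indices) when `t+1` is
odd, and even (pairs starting at even indices) when `t+1` is even. -/
def oetsSteps (a : Fin n → α) : ℕ → (Fin n → α)
  | 0 => a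
  | t + 1 => oetsRound ((t + 1) % 2) (oetsSteps a t)

namespace OetsAux

/-! ### The infinite (ℕ-indexed) model of OETS on booleans -/

/-- One round of OETS on an infinite boolean array. -/
def iround (r : ℕ) (s : ℕ → Bool) : ℕ → Bool := fun x =>
  if x % 2 = r % 2 then min (s x) (s (x + 1))
  else if 0 < x then max (s (x - 1)) (s x) else s x

/-- The trajectory of the infinite model. -/
def isteps (s : ℕ → Bool) : ℕ → ℕ → Bool
  | 0 => s
  | t + 1 => iround ((t + 1) % 2) (isteps s t)

/-- Number of `false` entries among positions `0, …, q`. -/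
def zl (s : ℕ → Bool) : ℕ → ℕ
  | 0 => if s 0 then 0 else 1
  | m + 1 => zl s m + (if s (m + 1) then 0 else 1)

/-- Parity rigidity: every true–false boundary `(b, b+1)` has `b+1 ≡ t [MOD 2]`, i.e.
the comparator across the boundary is active in the next round. -/
def InvA (t : ℕ) (s : ℕ → Bool) : Prop :=
  ∀ b : ℕ, s b = true → s (b + 1) = false → (b + 1) % 2 = t % 2

/-- The pairwise pipelining bound: for any two non-parked zeros at `p ≤ q`,
`p + t + zl q + 1 ≤ N + 2 * zl p`. -/
def InvP (N t : ℕ) (s : ℕ → Bool) : Prop :=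
  ∀ p q : ℕ, p ≤ q → s p = false → s q = false → zl s p ≤ p → zl s q ≤ q →
    p + t + zl s q + 1 ≤ N + 2 * zl s p

/-! ### Elementary facts about `zl` -/

lemma zl_le (s : ℕ → Bool) : ∀ q, zl s q ≤ q + 1
  | 0 => by simp only [zl]; split <;> omega
  | q + 1 => by have := zl_le s q; simp only [zl]; split <;> omega

lemma zl_succ_false (s : ℕ → Bool) (q : ℕ) (h : s (q + 1) = false) :
    zl s (q + 1) = zl s q + 1 := by simp [zl, h]

lemma zl_pos (s : ℕ → Bool) (q : ℕ) (h : s q = false) : 1 ≤ zl s q := by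
  cases q with
  | zero => simp [zl, h]
  | succ m => rw [zl_succ_false s m h]; omega

lemma zl_add (s : ℕ → Bool) (p : ℕ) : ∀ d, zl s (p + d) ≤ zl s p + d
  | 0 => le_refl _
  | d + 1 => by
      have := zl_add s p d
      show zl s ((p + d) + 1) ≤ _
      simp only [zl]; split <;> omega

lemma zl_full (s : ℕ → Bool) : ∀ q, zl s q = q + 1 → ∀ p, p ≤ q → s p = false
  | 0, h, p, hp => by
      have hp0 : p = 0 := by omega
      subst hp0
      cases h0 : s 0 with
      | false => rfl
      | true => simp [zl, h0] at h
  | q + 1, h, p, hp => by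
      have hle := zl_le s q
      have hq1 : s (q + 1) = false := by
        cases hq : s (q + 1) with
        | false => rfl
        | true => simp only [zl, hq, if_true] at h; omega
      have h' : zl s q = q + 1 := by
        rw [zl_succ_false s q hq1] at h; omega
      rcases Nat.lt_succ_iff_lt_or_eq.mp (Nat.lt_succ_of_le hp) with h2 | h2
      · exact zl_full s q h' p (by omega)
      · rw [h2]; exact hq1

/-! ### Determinism of the dynamics under parity rigidity -/

lemma det0 {t : ℕ} {s : ℕ → Bool} (hA : InvA t s) :
    iround ((t + 1) % 2) s 0 = false ↔ (s 0 = false ∨ (s 0 = true ∧ s 1 = false)) := by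
  have hmm : (t + 1) % 2 % 2 = (t + 1) % 2 := Nat.mod_mod_of_dvd _ dvd_rfl
  simp only [iround, hmm, lt_irrefl, if_false]
  by_cases hp : 0 % 2 = (t + 1) % 2
  · rw [if_pos hp]
    cases h0 : s 0 <;> cases h1 : s 1 <;> simp
  · rw [if_neg hp]
    cases h0 : s 0 with
    | false => simp
    | true =>
        constructor
        · intro h; exact absurd h (by simp)
        · intro h
          rcases h with h | ⟨_, h1⟩
          · exact absurd h (by simp)
          · exact absurd (hA 0 h0 h1) (by omega)

lemma detS {t : ℕ} {s : ℕ → Bool} (hA : InvA t s) (x : ℕ) :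
    iround ((t + 1) % 2) s (x + 1) = false ↔
      ((s (x + 1) = false ∧ s x = false) ∨ (s (x + 1) = true ∧ s (x + 2) = false)) := by
  have hmm : (t + 1) % 2 % 2 = (t + 1) % 2 := Nat.mod_mod_of_dvd _ dvd_rfl
  simp only [iround, hmm, Nat.add_sub_cancel, Nat.succ_pos, if_true]
  by_cases hp : (x + 1) % 2 = (t + 1) % 2
  · rw [if_pos hp]
    cases h1 : s (x + 1) with
    | false =>
        cases h0 : s x with
        | false => simp
        | true => exact absurd (hA x h0 h1) (by omega)
    | true => cases h2 : s (x + 2) <;> simp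
  · rw [if_neg hp]
    cases h1 : s (x + 1) with
    | false => cases h0 : s x <;> simp
    | true =>
        constructor
        · intro h
          cases h0 : s x <;> rw [h0] at h <;> exact absurd h (by decide)
        · intro h
          rcases h with ⟨hf, _⟩ | ⟨_, h2⟩
          · exact absurd hf (by simp)
          · exact absurd (hA (x + 1) h1 h2) (by omega)

/-- Under parity rigidity, one round does not change the number of zeros in `[0, m]`
except when a zero crosses the boundary from `m+1` to `m`. -/
lemma count {t : ℕ} {s : ℕ → Bool} (hA : InvA t s) :
    ∀ m, zl (iround ((t + 1) % 2) s) m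
      = zl s m + (if s m = true ∧ s (m + 1) = false then 1 else 0)
  | 0 => by
      have hd := det0 hA
      cases h0 : s 0 with
      | false =>
          have hv : iround ((t + 1) % 2) s 0 = false := hd.mpr (Or.inl h0)
          simp [zl, hv, h0]
      | true =>
          cases h1 : s 1 with
          | false =>
              have hv : iround ((t + 1) % 2) s 0 = false := hd.mpr (Or.inr ⟨h0, h1⟩)
              simp [zl, hv, h0, h1]
          | true =>
              have hv : iround ((t + 1) % 2) s 0 = true := by
                cases hv : iround ((t + 1) % 2) s 0 with
                | true => rfl
                | false =>
                    exfalso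
                    rcases hd.mp hv with h | ⟨_, h⟩
                    · simp [h0] at h
                    · simp [h1] at h
              simp [zl, hv, h0, h1]
  | m + 1 => by
      have ih := count hA m
      have hd := detS hA m
      have hrec : zl (iround ((t + 1) % 2) s) (m + 1)
          = zl (iround ((t + 1) % 2) s) m
            + (if iround ((t + 1) % 2) s (m + 1) then 0 else 1) := rfl
      have hrec2 : zl s (m + 1) = zl s m + (if s (m + 1) then 0 else 1) := rfl
      rw [hrec, hrec2, ih]
      cases h1 : s (m + 1) with
      | false =>
          cases h0 : s m with
          | false =>
              have hv : iround ((t + 1) % 2) s (m + 1) = false := hd.mpr (Or.inl ⟨h1, h0⟩)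
              simp [hv, h0, h1]
          | true =>
              have hv : iround ((t + 1) % 2) s (m + 1) = true := by
                cases hv : iround ((t + 1) % 2) s (m + 1) with
                | true => rfl
                | false =>
                    exfalso
                    rcases hd.mp hv with ⟨_, h⟩ | ⟨h, _⟩
                    · simp [h0] at h
                    · simp [h1] at h
              simp [hv, h0, h1]
      | true =>
          cases h2 : s (m + 2) with
          | false =>
              have hv : iround ((t + 1) % 2) s (m + 1) = false := hd.mpr (Or.inr ⟨h1, h2⟩)
              simp [hv, h1, h2]
          | true =>
              have hv : iround ((t + 1) % 2) s (m + 1) = true := by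
                cases hv : iround ((t + 1) % 2) s (m + 1) with
                | true => rfl
                | false =>
                    exfalso
                    rcases hd.mp hv with ⟨h, _⟩ | ⟨_, h⟩
                    · simp [h1] at h
                    · simp [h2] at h
              simp [hv, h1, h2]

/-! ### Preservation of the invariants -/

lemma A_step {t : ℕ} {s : ℕ → Bool} (hA : InvA t s) :
    InvA (t + 1) (iround ((t + 1) % 2) s) := by
  intro b hT hF
  rcases (detS hA b).mp hF with ⟨h1, h0⟩ | ⟨h1, h2⟩
  · -- the zero at b+1 stayed (blocked); so the zero at b must have moved away
    cases b with
    | zero =>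
        have hv : iround ((t + 1) % 2) s 0 = false := (det0 hA).mpr (Or.inl h0)
        rw [hT] at hv; exact absurd hv (by simp)
    | succ k =>
        have hnot : ¬ iround ((t + 1) % 2) s (k + 1) = false := by
          rw [hT]; simp
        have hk : s k = true := by
          cases hk : s k with
          | true => rfl
          | false => exact absurd ((detS hA k).mpr (Or.inl ⟨h0, hk⟩)) hnot
        have := hA k hk h0
        omega
  · -- the zero moved from b+2 to b+1
    have := hA (b + 1) h1 h2
    omega

lemma P_step {N t : ℕ} {s : ℕ → Bool} (hA : InvA t s) (hP : InvP N t s) :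
    InvP N (t + 1) (iround ((t + 1) % 2) s) := by
  intro p q hpq hFp hFq hnp hnq
  -- non-parked zeros cannot sit at position 0
  obtain ⟨k, rfl⟩ : ∃ k, p = k + 1 := by
    refine ⟨p - 1, ?_⟩
    have h0 : p ≠ 0 := by
      intro h; subst h
      have := zl_pos _ 0 hFp; omega
    omega
  obtain ⟨l, rfl⟩ : ∃ l, q = l + 1 := by
    refine ⟨q - 1, ?_⟩
    have h0 : q ≠ 0 := by
      intro h; subst h
      have := zl_pos _ 0 hFq; omega
    omega
  have cp := count hA (k + 1)
  have cq := count hA (l + 1)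
  rcases (detS hA k).mp hFp with ⟨hp1, hp0⟩ | ⟨hp1, hp2⟩ <;>
    rcases (detS hA l).mp hFq with ⟨hq1, hq0⟩ | ⟨hq1, hq2⟩
  · -- p stayed (blocked by k), q stayed (blocked by l)
    rw [if_neg (by simp [hp1])] at cp
    rw [if_neg (by simp [hq1])] at cq
    have ep : zl s (k + 1) = zl s k + 1 := zl_succ_false s k hp1
    have eq' : zl s (l + 1) = zl s l + 1 := zl_succ_false s l hq1
    have := hP k (l + 1) (by omega) hp0 hq1 (by omega) (by omega)
    omega
  · -- p stayed (blocked by k), q moved from l+2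
    rw [if_neg (by simp [hp1])] at cp
    rw [if_pos ⟨hq1, hq2⟩] at cq
    have ep : zl s (k + 1) = zl s k + 1 := zl_succ_false s k hp1
    have eq' : zl s (l + 2) = zl s (l + 1) + 1 := zl_succ_false s (l + 1) hq2
    have := hP k (l + 2) (by omega) hp0 hq2 (by omega) (by omega)
    omega
  · -- p moved from k+2, q stayed
    rw [if_pos ⟨hp1, hp2⟩] at cp
    rw [if_neg (by simp [hq1])] at cq
    have ep : zl s (k + 2) = zl s (k + 1) + 1 := zl_succ_false s (k + 1) hp2
    have hkl : k ≠ l := by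
      intro h; subst h; rw [hp1] at hq1; exact absurd hq1 (by simp)
    have := hP (k + 2) (l + 1) (by omega) hp2 hq1 (by omega) (by omega)
    omega
  · -- both moved
    rw [if_pos ⟨hp1, hp2⟩] at cp
    rw [if_pos ⟨hq1, hq2⟩] at cq
    have ep : zl s (k + 2) = zl s (k + 1) + 1 := zl_succ_false s (k + 1) hp2
    have eq' : zl s (l + 2) = zl s (l + 1) + 1 := zl_succ_false s (l + 1) hq2
    have := hP (k + 2) (l + 2) (by omega) hp2 hq2 (by omega) (by omega)
    omega

/-! ### The base case: the invariants hold after one round -/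

lemma A_base (s : ℕ → Bool) : InvA 1 (iround 1 s) := by
  intro b hT hF
  by_contra hpar
  have hb' : b % 2 = 1 % 2 := by omega
  have hF' : iround 1 s (b + 1) = false := hF
  rw [iround] at hF'
  simp only [Nat.add_sub_cancel] at hF'
  rw [if_neg (by omega), if_pos (Nat.succ_pos b)] at hF'
  have h0 : s b = false ∧ s (b + 1) = false := by
    cases hx : s b <;> cases hy : s (b + 1) <;> rw [hx, hy] at hF' <;>
      simp_all
  have hT' : iround 1 s b = true := hT
  rw [iround, if_pos hb'] at hT'
  rw [h0.1, h0.2] at hT'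
  exact absurd hT' (by decide)

lemma iround_upper {N r : ℕ} {s : ℕ → Bool} (h : ∀ x, N ≤ x → s x = true) :
    ∀ x, N ≤ x → iround r s x = true := by
  intro x hx
  rw [iround]
  split
  · rw [h x hx, h (x + 1) (by omega)]; decide
  · split
    · rw [h x hx]; cases s (x - 1) <;> decide
    · exact h x hx

lemma P_base {N : ℕ} (s : ℕ → Bool) (h : ∀ x, N ≤ x → s x = true) :
    InvP N 1 (iround 1 s) := by
  intro p q hpq hFp hFq hnp hnq
  have hq : q < N := by
    by_contra hc
    have := iround_upper (r := 1) h q (by omega)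
    rw [hFq] at this; exact absurd this (by simp)
  have h1 : zl (iround 1 s) q ≤ zl (iround 1 s) p + (q - p) := by
    have := zl_add (iround 1 s) p (q - p)
    rwa [Nat.add_sub_cancel' hpq] at this
  have h2 : 1 ≤ zl (iround 1 s) p := zl_pos _ p hFp
  omega

/-! ### The invariants hold at every positive time -/

lemma isteps_one (s : ℕ → Bool) : isteps s 1 = iround 1 s := rfl

lemma inv_all {N : ℕ} (s : ℕ → Bool) (h : ∀ x, N ≤ x → s x = true) :
    ∀ k, InvA (k + 1) (isteps s (k + 1)) ∧ InvP N (k + 1) (isteps s (k + 1)) := by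
  intro k
  induction k with
  | zero =>
      rw [isteps_one]
      exact ⟨A_base s, P_base s h⟩
  | succ m ih =>
      have h2 : isteps s (m + 2) = iround ((m + 2) % 2) (isteps s (m + 1)) := rfl
      rw [h2]
      exact ⟨A_step ih.1, P_step ih.1 ih.2⟩

/-! ### Bridging the finite and infinite models -/

/-- Extend a finite boolean array to `ℕ` by padding with `true`. -/
def ext (c : Fin n → Bool) : ℕ → Bool := fun x => if h : x < n then c ⟨x, h⟩ else true

lemma ext_upper (c : Fin n → Bool) : ∀ x, n ≤ x → ext c x = true := by
  intro x hx; exact dif_neg (by omega)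

lemma ext_lt (c : Fin n → Bool) (x : ℕ) (hx : x < n) : ext c x = c ⟨x, hx⟩ :=
  dif_pos hx

lemma ext_round (r : ℕ) (c : Fin n → Bool) :
    ext (oetsRound r c) = iround r (ext c) := by
  funext x
  by_cases hx : x < n
  · rw [ext_lt _ x hx]
    show oetsRound r c ⟨x, hx⟩ = iround r (ext c) x
    simp only [oetsRound, iround]
    by_cases hpar : x % 2 = r % 2
    · rw [if_pos hpar, if_pos hpar]
      by_cases hx1 : x + 1 < n
      · rw [dif_pos hx1, ext_lt _ x hx, ext_lt _ (x + 1) hx1]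
      · rw [dif_neg hx1, ext_lt _ x hx, ext_upper c (x + 1) (by omega)]
        cases c ⟨x, hx⟩ <;> decide
    · rw [if_neg hpar, if_neg hpar]
      by_cases hx0 : 0 < x
      · rw [dif_pos hx0, if_pos hx0, ext_lt _ x hx, ext_lt _ (x - 1) (by omega)]
      · rw [dif_neg hx0, if_neg hx0, ext_lt _ x hx]
  · rw [ext_upper _ x (by omega), (iround_upper (ext_upper c) x (by omega) : _)]

lemma ext_steps (c : Fin n → Bool) : ∀ t, ext (oetsSteps c t) = isteps (ext c) t
  | 0 => rfl
  | t + 1 => by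
      show ext (oetsRound ((t + 1) % 2) (oetsSteps c t)) = _
      rw [ext_round, ext_steps c t]
      rfl

/-! ### OETS sorts boolean arrays -/

theorem bool_sorted (c : Fin n → Bool) : Monotone (oetsSteps c n) := by
  cases n with
  | zero => intro i j _; exact i.elim0
  | succ m =>
      intro i j hij
      have hinv := inv_all (N := m + 1) (ext c) (ext_upper c) m
      set S := isteps (ext c) (m + 1) with hS
      have parked : ∀ x, S x = false → zl S x = x + 1 := by
        intro x hx
        by_contra hne
        have h1 : zl S x ≤ x := by have := zl_le S x; omega
        have := hinv.2 x x le_rfl hx hx h1 h1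
        omega
      have all0 : ∀ x y, y ≤ x → S x = false → S y = false := by
        intro x y hyx hx
        exact zl_full S x (parked x hx) y hyx
      have ei : oetsSteps c (m + 1) i = S (i : ℕ) := by
        have h1 := congrFun (ext_steps c (m + 1)) (i : ℕ)
        rw [← hS] at h1
        rw [← h1, ext_lt _ _ i.isLt]
      have ej : oetsSteps c (m + 1) j = S (j : ℕ) := by
        have h1 := congrFun (ext_steps c (m + 1)) (j : ℕ)
        rw [← hS] at h1
        rw [← h1, ext_lt _ _ j.isLt]
      rw [ei, ej]
      cases hj : S (j : ℕ) with
      | true => exact Bool.le_true _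
      | false =>
          rw [all0 (j : ℕ) (i : ℕ) hij hj]

/-! ### The 0–1 principle reduction -/

lemma round_comm (f : α → Bool) (hf : Monotone f) (r : ℕ) (g : Fin n → α) :
    (fun i => f (oetsRound r g i)) = oetsRound r (fun i => f (g i)) := by
  funext i
  simp only [oetsRound]
  split
  · split
    · exact hf.map_min
    · rfl
  · split
    · exact hf.map_max
    · rfl

lemma steps_comm (f : α → Bool) (hf : Monotone f) (a : Fin n → α) :
    ∀ t, (fun i => f (oetsSteps a t i)) = oetsSteps (fun i => f (a i)) t
  | 0 => rfl
  | t + 1 => by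
      show (fun i => f (oetsRound ((t + 1) % 2) (oetsSteps a t) i)) = _
      rw [round_comm f hf, steps_comm f hf a t]
      rfl

end OetsAux

/-- Odd-Even Transposition Sort sorts any array of `n` elements in at most `n` rounds:
after `n` alternating odd/even rounds the array is nondecreasing. -/
theorem oets_sorts (a : Fin n → α) : Monotone (oetsSteps a n) := by
  intro i j hij
  by_contra hc
  have hlt : oetsSteps a n j < oetsSteps a n i := lt_of_not_ge hc
  set f : α → Bool := fun x => decide (oetsSteps a n i ≤ x) with hf
  have hmono : Monotone f := by
    intro x y hxy
    by_cases h : oetsSteps a n i ≤ x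
    · have h' : oetsSteps a n i ≤ y := h.trans hxy
      simp [hf, h, h']
    · simp only [hf, decide_eq_false h]
      exact Bool.false_le _
  have key := OetsAux.bool_sorted (fun k => f (a k)) hij
  rw [← OetsAux.steps_comm f hmono a n] at key
  simp only [hf] at key
  have h1 : decide (oetsSteps a n i ≤ oetsSteps a n i) = true :=
    decide_eq_true le_rfl
  have h2 : decide (oetsSteps a n i ≤ oetsSteps a n j) = false :=
    decide_eq_false (not_le_of_gt hlt)
  rw [h1, h2] at key
  exact absurd key (by decide)
end

section
/- Let G be a directed graph, v a vertex, D the set of descendants of v, P the set of predecessors of v, and S = D ∩ P the SCC of v. Every strongly connected component of G other than S is entirely contained in exactly one of the three sets D \ S, P \ S, or the complement of D ∪ P. -/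
/-- Let `D`, `P` be the descendant and predecessor sets of a vertex `v` and `S = D ∩ P`
its SCC. Every strongly connected component other than `S` is entirely contained in
exactly one of `D \ S`, `P \ S`, or `(D ∪ P)ᶜ`. -/
theorem scc_trichotomy {V : Type*} (E : V → V → Prop) (v : V) :
    ∀ w : V,
      ({u : V | Relation.ReflTransGen E w u ∧ Relation.ReflTransGen E u w} ≠
        {u : V | Relation.ReflTransGen E v u} ∩ {u : V | Relation.ReflTransGen E u v}) →
      (let D := {u : V | Relation.ReflTransGen E v u}
       let P := {u : V | Relation.ReflTransGen E u v}
       let S := D ∩ P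
       let scc := {u : V | Relation.ReflTransGen E w u ∧ Relation.ReflTransGen E u w}
       (scc ⊆ D \ S ∧ ¬scc ⊆ P \ S ∧ ¬scc ⊆ (D ∪ P)ᶜ) ∨
       (¬scc ⊆ D \ S ∧ scc ⊆ P \ S ∧ ¬scc ⊆ (D ∪ P)ᶜ) ∨
       (¬scc ⊆ D \ S ∧ ¬scc ⊆ P \ S ∧ scc ⊆ (D ∪ P)ᶜ)) := by
  intro w hne D P S scc
  have hwscc : w ∈ scc := ⟨Relation.ReflTransGen.refl, Relation.ReflTransGen.refl⟩
  by_cases hvw : Relation.ReflTransGen E v w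
  · by_cases hwv : Relation.ReflTransGen E w v
    · -- w ∈ S, so scc = S, contradiction
      exfalso
      apply hne
      ext u
      constructor
      · rintro ⟨hwu, huw⟩
        exact ⟨hvw.trans hwu, huw.trans hwv⟩
      · rintro ⟨hvu, huv⟩
        exact ⟨hwv.trans hvu, huv.trans hvw⟩
    · -- w ∈ D \ P
      left
      refine ⟨?_, ?_, ?_⟩
      · rintro u ⟨hwu, huw⟩
        refine ⟨hvw.trans hwu, ?_⟩
        rintro ⟨-, huv⟩
        exact hwv (hwu.trans huv)
      · intro h
        exact hwv ((h hwscc).1)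
      · intro h
        exact (h hwscc) (Or.inl hvw)
  · by_cases hwv : Relation.ReflTransGen E w v
    · -- w ∈ P \ D
      right; left
      refine ⟨?_, ?_, ?_⟩
      · intro h
        exact hvw ((h hwscc).1)
      · rintro u ⟨hwu, huw⟩
        refine ⟨huw.trans hwv, ?_⟩
        rintro ⟨hvu, -⟩
        exact hvw (hvu.trans huw)
      · intro h
        exact (h hwscc) (Or.inr hwv)
    · -- w ∉ D ∪ P
      right; right
      refine ⟨?_, ?_, ?_⟩
      · intro h
        exact hvw ((h hwscc).1)
      · intro h
        exact hwv ((h hwscc).1)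
      · rintro u ⟨hwu, huw⟩ (hvu | huv)
        · exact hvw (hvu.trans huw)
        · exact hwv (hwu.trans huv)
end

section
/- Consider parallel source-propagation BFS: each node holds a value in Option (Fin n), the source s starts with some s and all others with none; at each step a node with value none takes the value s if any in-neighbour's value is some s (otherwise stays none), and a node with value some s keeps it. This update is idempotent on stabilized states: repeating the computation at a node whose in-neighbourhood values are unchanged does not change its state. Moreover after n steps, node i holds some s iff i is reachable from s. -/
variable {n : ℕ} (E : Fin n → Fin n → Prop) (s : Fin n)

open Classical in
/-- One step of parallel source-propagation BFS: a node holding `some v` keeps it; a node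
holding `none` takes `some s` if some in-neighbour holds `some s`, else stays `none`. -/
noncomputable def bfsStep (h : Fin n → Option (Fin n)) : Fin n → Option (Fin n) :=
  fun i =>
    match h i with
    | some v => some v
    | none => if ∃ j, E j i ∧ h j = some s then some s else none

/-- Initial state: the source holds `some s`, all other nodes hold `none`. -/
noncomputable def bfsInit : Fin n → Option (Fin n) := fun i =>
  if i = s then some s else none

open Classical

lemma bfsStep_some (h : Fin n → Option (Fin n)) (i v : Fin n) (hv : h i = some v) :
    bfsStep E s h i = some v := by
  simp [bfsStep, hv]

lemma bfsStep_none (h : Fin n → Option (Fin n)) (i : Fin n) (hv : h i = none) :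
    bfsStep E s h i = if ∃ j, E j i ∧ h j = some s then some s else none := by
  simp [bfsStep, hv]

/-- values stay in {none, some s} -/
lemma bfs_values (k : ℕ) (i : Fin n) :
    (bfsStep E s)^[k] (bfsInit s) i = none ∨ (bfsStep E s)^[k] (bfsInit s) i = some s := by
  induction k generalizing i with
  | zero =>
    by_cases hi : i = s <;> simp [bfsInit, hi]
  | succ k ih =>
    rw [Function.iterate_succ_apply']
    rcases ih i with h0 | h0
    · rw [bfsStep_none E s _ _ h0]
      split <;> simp
    · right; exact bfsStep_some E s _ _ _ h0

/-- persistence -/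
lemma bfs_persist (h : Fin n → Option (Fin n)) (m : ℕ) (i v : Fin n) (hv : h i = some v) :
    (bfsStep E s)^[m] h i = some v := by
  induction m with
  | zero => exact hv
  | succ m ih => rw [Function.iterate_succ_apply']; exact bfsStep_some E s _ _ _ ih

/-- soundness -/
lemma bfs_sound (k : ℕ) (i : Fin n)
    (hk : (bfsStep E s)^[k] (bfsInit s) i = some s) : Relation.ReflTransGen E s i := by
  induction k generalizing i with
  | zero =>
    by_cases hi : i = s
    · exact hi ▸ Relation.ReflTransGen.refl
    · simp [bfsInit, hi] at hk
  | succ k ih =>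
    rw [Function.iterate_succ_apply'] at hk
    rcases bfs_values E s k i with h0 | h0
    · rw [bfsStep_none E s _ _ h0] at hk
      split at hk
      · rename_i hex
        obtain ⟨j, hji, hj⟩ := hex
        exact (ih j hj).tail hji
      · simp at hk
    · exact ih i h0

/-- completeness (some step works) -/
lemma bfs_complete (i : Fin n) (hr : Relation.ReflTransGen E s i) :
    ∃ m, (bfsStep E s)^[m] (bfsInit s) i = some s := by
  induction hr with
  | refl => exact ⟨0, by simp [bfsInit]⟩
  | tail hab hbc ih =>
    rename_i b c
    obtain ⟨m, hm⟩ := ih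
    refine ⟨m + 1, ?_⟩
    rw [Function.iterate_succ_apply']
    rcases bfs_values E s m c with h0 | h0
    · rw [bfsStep_none E s _ _ h0, if_pos ⟨b, hbc, hm⟩]
    · exact bfsStep_some E s _ _ _ h0

noncomputable def bfsT (k : ℕ) : Finset (Fin n) :=
  Finset.univ.filter (fun i => (bfsStep E s)^[k] (bfsInit s) i = some s)

lemma bfs_T_mono (k : ℕ) : bfsT E s k ⊆ bfsT E s (k + 1) := by
  intro i hi
  simp only [bfsT, Finset.mem_filter, Finset.mem_univ, true_and] at hi ⊢
  rw [Function.iterate_succ_apply']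
  exact bfsStep_some E s _ _ _ hi

lemma bfs_T_ssub (k : ℕ)
    (hne : bfsStep E s ((bfsStep E s)^[k] (bfsInit s)) ≠ (bfsStep E s)^[k] (bfsInit s)) :
    bfsT E s k ⊂ bfsT E s (k + 1) := by
  refine ⟨bfs_T_mono E s k, ?_⟩
  intro hsub
  apply hne
  funext i
  rcases bfs_values E s k i with h0 | h0
  · rcases bfs_values E s (k + 1) i with h1 | h1
    · have hsucc := Function.iterate_succ_apply' (bfsStep E s) k (bfsInit s)
      rw [h0, ← hsucc, h1]
    · have : i ∈ bfsT E s k := by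
        apply hsub
        simp only [bfsT, Finset.mem_filter, Finset.mem_univ, true_and]
        exact h1
      simp only [bfsT, Finset.mem_filter, Finset.mem_univ, true_and] at this
      rw [h0] at this; exact absurd this (by simp)
  · rw [h0]; exact bfsStep_some E s _ _ _ h0

lemma bfs_stab : ∃ k ≤ n, bfsStep E s ((bfsStep E s)^[k] (bfsInit s)) = (bfsStep E s)^[k] (bfsInit s) := by
  by_contra hcon
  push_neg at hcon
  have key : ∀ k ≤ n, k + 1 ≤ (bfsT E s k).card := by
    intro k hk
    induction k with
    | zero =>
      have : s ∈ bfsT E s 0 := by simp [bfsT, bfsInit]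
      exact Finset.card_pos.mpr ⟨s, this⟩
    | succ k ih =>
      have h1 := ih (Nat.le_of_succ_le hk)
      have h2 := Finset.card_lt_card (bfs_T_ssub E s k (hcon k (Nat.le_of_succ_le hk)))
      omega
  have := key n le_rfl
  have hle : (bfsT E s n).card ≤ n := by
    have := Finset.card_le_univ (bfsT E s n)
    simpa using this
  omega

/-- The update is idempotent on stabilized states: if the values of all in-neighbours of
`i` are unchanged by a step, then updating `i` again does not change its state. Moreover
after `n` steps node `i` holds `some s` iff `i` is reachable from `s`. -/
theorem bfs_propagation_correct :
    (∀ (h : Fin n → Option (Fin n)) (i : Fin n),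
      (∀ j, E j i → bfsStep E s h j = h j) →
      bfsStep E s (bfsStep E s h) i = bfsStep E s h i) ∧
    (∀ i : Fin n,
      (bfsStep E s)^[n] (bfsInit s) i = some s ↔ Relation.ReflTransGen E s i) := by
  constructor
  · intro h i hstab
    cases hc : bfsStep E s h i with
    | some v => exact bfsStep_some E s _ _ _ hc
    | none =>
      cases hh : h i with
      | some v => rw [bfsStep_some E s _ _ _ hh] at hc; exact absurd hc (by simp)
      | none =>
        have hc' := hc
        rw [bfsStep_none E s _ _ hh] at hc'
        rw [bfsStep_none E s _ _ hc, if_neg]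
        intro ⟨j, hji, hj⟩
        rw [hstab j hji] at hj
        split at hc'
        · exact absurd hc' (by simp)
        · rename_i hnex; exact hnex ⟨j, hji, hj⟩
  · intro i
    constructor
    · exact bfs_sound E s n i
    · intro hr
      obtain ⟨m, hm⟩ := bfs_complete E s i hr
      by_cases hmn : m ≤ n
      · have : (bfsStep E s)^[n] (bfsInit s) = (bfsStep E s)^[n - m] ((bfsStep E s)^[m] (bfsInit s)) := by
          rw [← Function.iterate_add_apply]
          congr 1
          omega
        rw [this]
        exact bfs_persist E s _ _ _ _ hm
      · obtain ⟨k, hk, hfix⟩ := bfs_stab E s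
        have heq : ∀ j, k ≤ j → (bfsStep E s)^[j] (bfsInit s) = (bfsStep E s)^[k] (bfsInit s) := by
          intro j hj
          have : j = (j - k) + k := by omega
          rw [this, Function.iterate_add_apply, Function.iterate_fixed hfix]
        rw [heq n hk, ← heq m (by omega)]
        exact hm
end
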